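/- Let A be a complex n×n matrix such that −A − A† is positive semidefinite, and let λ, μ be distinct eigenvalues of A with Re λ = 0. Then the generalized eigenspaces of λ and μ are orthogonal: for every φ ∈ ker((A − λI)ⁿ) and every χ ∈ ker((A − μI)ⁿ), (φ, χ) = 0 with respect to the standard inner product on ℂⁿ. -/

import Mathlib

open scoped Matrix ComplexOrder

open Matrix

private lemma adj_dot {n : ℕ} (M : Matrix (Fin n) (Fin n) ℂ) (x y : Fin n → ℂ) :
    star x ⬝ᵥ M *ᵥ y = star (Mᴴ *ᵥ x) ⬝ᵥ y := by
  rw [star_mulVec, conjTranspose_conjTranspose, dotProduct_mulVec]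

/-- If `v` is an eigenvector of `A` for `lam` with `Re lam = 0`, then
`Aᴴ v = conj lam • v`. -/
private lemma eig_conj {n : ℕ} {A : Matrix (Fin n) (Fin n) ℂ}
    (hA : (-A - Aᴴ).PosSemidef) {lam : ℂ} (hre : lam.re = 0)
    {v : Fin n → ℂ} (hv : A *ᵥ v = lam • v) :
    Aᴴ *ᵥ v = (starRingEnd ℂ) lam • v := by
  have hconj : (starRingEnd ℂ) lam = -lam := by
    apply Complex.ext <;> simp [hre]
  have hzero : star v ⬝ᵥ (-A - Aᴴ) *ᵥ v = 0 := by
    have h1 : star v ⬝ᵥ Aᴴ *ᵥ v = (starRingEnd ℂ) lam * (star v ⬝ᵥ v) := by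
      rw [adj_dot, conjTranspose_conjTranspose, hv]
      simp [star_smul, smul_dotProduct, smul_eq_mul]
    have h2 : star v ⬝ᵥ A *ᵥ v = lam * (star v ⬝ᵥ v) := by
      rw [hv]; simp [dotProduct_smul, smul_eq_mul]
    rw [sub_mulVec, neg_mulVec, dotProduct_sub, dotProduct_neg, h1, h2, hconj]
    ring
  have hker := (hA.dotProduct_mulVec_zero_iff v).mp hzero
  have h3 : -(A *ᵥ v) - Aᴴ *ᵥ v = 0 := by
    rw [← neg_mulVec, ← sub_mulVec]; exact hker
  rw [hv] at h3
  rw [hconj, neg_smul]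
  linear_combination (norm := module) -h3

/-- Generalized eigenvectors for an eigenvalue on the imaginary axis are eigenvectors. -/
private lemma gen_eig {n : ℕ} {A : Matrix (Fin n) (Fin n) ℂ}
    (hA : (-A - Aᴴ).PosSemidef) {lam : ℂ} (hre : lam.re = 0) :
    ∀ k : ℕ, ∀ v : Fin n → ℂ,
      ((A - lam • (1 : Matrix (Fin n) (Fin n) ℂ)) ^ k) *ᵥ v = 0 →
      (A - lam • (1 : Matrix (Fin n) (Fin n) ℂ)) *ᵥ v = 0 := by
  intro k
  induction k with
  | zero => intro v hv; simp only [pow_zero, one_mulVec] at hv; simp [hv]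
  | succ k ih =>
    intro v hv
    set B := A - lam • (1 : Matrix (Fin n) (Fin n) ℂ) with hB
    set w := B *ᵥ v with hw
    have hwk : (B ^ k) *ᵥ w = 0 := by
      rw [hw, mulVec_mulVec, ← pow_succ, hv]
    have hweig : B *ᵥ w = 0 := ih w hwk
    have hsub : ∀ x : Fin n → ℂ, B *ᵥ x = A *ᵥ x - lam • x := by
      intro x; rw [hB, sub_mulVec, smul_mulVec, one_mulVec]
    have hAw : A *ᵥ w = lam • w := by
      have := hweig; rw [hsub] at this; exact sub_eq_zero.mp this
    have hAHw : Aᴴ *ᵥ w = (starRingEnd ℂ) lam • w := eig_conj hA hre hAw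
    have hwz : star w ⬝ᵥ w = 0 := by
      have : star w ⬝ᵥ w = star w ⬝ᵥ (A *ᵥ v) - lam * (star w ⬝ᵥ v) := by
        rw [hw, hsub]; simp [dotProduct_sub, dotProduct_smul, smul_eq_mul]
      rw [this, adj_dot, hAHw]
      simp only [star_smul, smul_dotProduct, smul_eq_mul, Complex.star_def,
        Complex.conj_conj]
      ring
    have : w = 0 := dotProduct_star_self_eq_zero.mp hwz
    exact this
  
/-- if `−A − A†` is positive semidefinite and `λ ≠ μ` are eigenvalues of
`A` with `Re λ = 0`, then the generalized eigenspaces of `λ` and `μ` are orthogonal. -/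
theorem stmt13 {n : ℕ} (A : Matrix (Fin n) (Fin n) ℂ)
    (hA : (-A - Aᴴ).PosSemidef)
    (lam mu : ℂ) (hne : lam ≠ mu) (hre : lam.re = 0)
    (hlam : ∃ v : Fin n → ℂ, v ≠ 0 ∧ A.mulVec v = lam • v)
    (hmu : ∃ v : Fin n → ℂ, v ≠ 0 ∧ A.mulVec v = mu • v) :
    ∀ φ χ : Fin n → ℂ,
      ((A - lam • (1 : Matrix (Fin n) (Fin n) ℂ)) ^ n).mulVec φ = 0 →
      ((A - mu • (1 : Matrix (Fin n) (Fin n) ℂ)) ^ n).mulVec χ = 0 →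
      dotProduct (star φ) χ = 0 := by
  intro φ χ hφ hχ
  -- φ is a genuine eigenvector (possibly zero)
  have hφeig : (A - lam • (1 : Matrix (Fin n) (Fin n) ℂ)) *ᵥ φ = 0 :=
    gen_eig hA hre n φ hφ
  have hAφ : A *ᵥ φ = lam • φ := by
    rw [sub_mulVec, smul_mulVec, one_mulVec] at hφeig
    exact sub_eq_zero.mp hφeig
  have hAHφ : Aᴴ *ᵥ φ = (starRingEnd ℂ) lam • φ := eig_conj hA hre hAφ
  -- key: ⟪φ, (A - μ) x⟫ = (λ - μ) ⟪φ, x⟫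
  have hkey : ∀ x : Fin n → ℂ,
      star φ ⬝ᵥ (A - mu • (1 : Matrix (Fin n) (Fin n) ℂ)) *ᵥ x
        = (lam - mu) * (star φ ⬝ᵥ x) := by
    intro x
    rw [sub_mulVec, smul_mulVec, one_mulVec, dotProduct_sub, adj_dot, hAHφ]
    simp only [star_smul, smul_dotProduct, smul_eq_mul, dotProduct_smul,
      Complex.star_def, Complex.conj_conj]
    ring
  have hpow : ∀ k : ℕ, ∀ x : Fin n → ℂ,
      star φ ⬝ᵥ ((A - mu • (1 : Matrix (Fin n) (Fin n) ℂ)) ^ k) *ᵥ x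
        = (lam - mu) ^ k * (star φ ⬝ᵥ x) := by
    intro k
    induction k with
    | zero => intro x; simp
    | succ k ih =>
      intro x
      rw [pow_succ, ← mulVec_mulVec, ih, hkey, pow_succ]
      ring
  have := hpow n χ
  rw [hχ, dotProduct_zero] at this
  have hlm : (lam - mu) ^ n ≠ 0 := pow_ne_zero _ (sub_ne_zero.mpr hne)
  exact (mul_eq_zero.mp this.symm).resolve_left hlm
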